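/- arXiv:1401.7183 — 2 statements merged into one kernel-verified Lean document; each statement's English description precedes it below -/
import Mathlib

section
/- For every fixed integer i ≥ 1, the limit as k → ∞ of ᾱ({1, 2i+1, 2k}) equals 1/2. -/
open Filter

/-- The upper density of a set of integers. -/
noncomputable def density (A : Set ℤ) : ℝ :=
  Filter.limsup
    (fun N : ℕ => ((A ∩ Set.Icc (-(N : ℤ)) (N : ℤ)).ncard : ℝ) / (2 * (N : ℝ) + 1))
    Filter.atTop

/-- A set of integers is independent in the distance graph `G(S)` if no two distinct
elements differ by an element of `S`. -/
def IsIndepSet (S : Finset ℕ) (A : Set ℤ) : Prop :=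
  ∀ a ∈ A, ∀ b ∈ A, a ≠ b → (a - b).natAbs ∉ S

/-- The independence ratio of the distance graph `G(S)`. -/
noncomputable def indRatio (S : Finset ℕ) : ℝ :=
  sSup (density '' {A : Set ℤ | IsIndepSet S A})

def Aset (i k : ℕ) : Set ℤ :=
  {n : ℤ | ∃ j : ℕ, j < k ∧ (n % (4*k+4*i+2 : ℤ) = 2*j ∨ n % (4*k+4*i+2 : ℤ) = 2*k+2*i+1+2*j)}

lemma t_small (p t x y : ℤ) (hp : 0 < p) (h : p * t = x - y) (hx : -p < x) (hx' : x < p)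
    (hy : -p < y) (hy' : y < p) : t = -1 ∨ t = 0 ∨ t = 1 := by
  have h1 : p * t < 2 * p := by linarith
  have h2 : -(2 * p) < p * t := by linarith
  have ht1 : t < 2 := by nlinarith
  have ht2 : -2 < t := by nlinarith
  omega

lemma aset_indep (i k : ℕ) (hk : 1 ≤ k) (hi : 1 ≤ i) :
    IsIndepSet ({1, 2 * i + 1, 2 * k} : Finset ℕ) (Aset i k) := by
  intro a ha b hb hne hmem
  obtain ⟨j, hj, hja⟩ := ha
  obtain ⟨l, hl, hlb⟩ := hb
  simp only [Finset.mem_insert, Finset.mem_singleton] at hmem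
  set p : ℤ := (4*k+4*i+2 : ℤ) with hp
  have hppos : (0:ℤ) < p := by positivity
  have h1 := Int.mul_ediv_add_emod a p
  have h2 := Int.mul_ediv_add_emod b p
  have har : 0 ≤ a % p := Int.emod_nonneg a (by omega)
  have har' : a % p < p := Int.emod_lt_of_pos a hppos
  have hbr : 0 ≤ b % p := Int.emod_nonneg b (by omega)
  have hbr' : b % p < p := Int.emod_lt_of_pos b hppos
  have hms : p * (a / p - b / p) = p * (a / p) - p * (b / p) := mul_sub p _ _
  have hab : a - b = p * (a / p - b / p) + (a % p - b % p) := by linarith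
  have hd : -p < a - b ∧ a - b < p := by omega
  have ht : a / p - b / p = -1 ∨ a / p - b / p = 0 ∨ a / p - b / p = 1 := by
    apply t_small p _ (a - b) (a % p - b % p) hppos (by linarith) hd.1 hd.2 (by omega) (by omega)
  rcases ht with ht | ht | ht <;> rw [ht] at hab <;> omega

lemma ncard_Icc_int (a b : ℤ) : (Set.Icc a b).ncard = (b + 1 - a).toNat := by
  rw [← Finset.coe_Icc, Set.ncard_coe_finset, Int.card_Icc]

lemma count_upper (A : Set ℤ) (N : ℕ) :
    (A ∩ Set.Icc (-(N : ℤ)) (N : ℤ)).ncard ≤ 2 * N + 1 := by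
  have h := Set.ncard_le_ncard (Set.inter_subset_right (s := A))
      (Set.finite_Icc (-(N : ℤ)) (N : ℤ))
  rw [ncard_Icc_int] at h
  omega

lemma count_indep (S : Finset ℕ) (h1 : 1 ∈ S) (A : Set ℤ) (hA : IsIndepSet S A) (N : ℕ) :
    (A ∩ Set.Icc (-(N : ℤ)) (N : ℤ)).ncard ≤ N + 1 := by
  have key : (A ∩ Set.Icc (-(N : ℤ)) (N : ℤ)).ncard ≤ (Set.Icc (0 : ℤ) (N : ℤ)).ncard := by
    refine Set.ncard_le_ncard_of_injOn (fun a => (a + N + 1) / 2) ?_ ?_ (Set.finite_Icc _ _)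
    · rintro a ⟨-, ha2⟩
      simp only [Set.mem_Icc] at ha2 ⊢
      omega
    · rintro a ⟨haA, ha2⟩ b ⟨hbA, hb2⟩ hab
      dsimp only at hab
      by_contra hne
      have : (a - b).natAbs = 1 := by omega
      exact hA a haA b hbA hne (this ▸ h1)
  rw [ncard_Icc_int] at key
  omega

lemma count_lower (i k M : ℕ) :
    4 * k * M ≤ (Aset i k ∩ Set.Icc (-(((4*k+4*i+2) * M : ℕ) : ℤ)) (((4*k+4*i+2) * M : ℕ) : ℤ)).ncard := by
  set p : ℤ := (4*k+4*i+2 : ℤ) with hp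
  have hppos : (0:ℤ) < p := by positivity
  set Rfin : Finset ℤ := (Finset.range k).image (fun j : ℕ => (2*j : ℤ)) ∪
      (Finset.range k).image (fun j : ℕ => (2*k+2*i+1+2*j : ℤ)) with hR
  have hmemR : ∀ r ∈ Rfin, 0 ≤ r ∧ r < p ∧ ∃ j : ℕ, j < k ∧ (r = 2*j ∨ r = 2*k+2*i+1+2*j) := by
    intro r hr
    simp only [hR, Finset.mem_union, Finset.mem_image, Finset.mem_range] at hr
    rcases hr with ⟨j, hj, rfl⟩ | ⟨j, hj, rfl⟩ <;>
      exact ⟨by positivity, by push_cast [hp]; omega, j, hj, by omega⟩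
  have hcardR : Rfin.card = 2 * k := by
    rw [hR, Finset.card_union_of_disjoint, Finset.card_image_of_injective,
      Finset.card_image_of_injective, Finset.card_range]
    · omega
    · intro a b hab; dsimp only at hab; omega
    · intro a b hab; dsimp only at hab; omega
    · rw [Finset.disjoint_left]
      rintro x hx hy
      simp only [Finset.mem_image, Finset.mem_range] at hx hy
      obtain ⟨a, -, rfl⟩ := hx
      obtain ⟨b, -, hb⟩ := hy
      omega
  have hmod : ∀ (m r : ℤ), 0 ≤ r → r < p → (m * p + r) % p = r := by
    intro m r h0 h1
    have : m * p + r = r + p * m := by ring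
    rw [this, Int.add_mul_emod_self_left, Int.emod_eq_of_lt h0 h1]
  set F : Finset ℤ := ((Finset.Ico (-(M:ℤ)) (M:ℤ)) ×ˢ Rfin).image (fun mr => mr.1 * p + mr.2)
    with hF
  have hcardF : F.card = 4 * k * M := by
    rw [hF, Finset.card_image_of_injOn, Finset.card_product, Int.card_Ico, hcardR]
    · have hM : ((M:ℤ) - -(M:ℤ)).toNat = 2*M := by omega
      rw [hM]; ring
    · rintro ⟨m, r⟩ hmr ⟨m', r'⟩ hmr' heq
      simp only [Finset.mem_coe, Finset.mem_product, Finset.mem_Ico] at hmr hmr'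
      obtain ⟨h0, h1, _⟩ := hmemR r hmr.2
      obtain ⟨h0', h1', _⟩ := hmemR r' hmr'.2
      have heq' : m * p + r = m' * p + r' := heq
      have hr : r = r' := by
        have e1 := hmod m r h0 h1
        have e2 := hmod m' r' h0' h1'
        rw [heq'] at e1; omega
      have : m = m' := by
        refine mul_right_cancel₀ (b := p) hppos.ne' ?_
        linarith [heq']
      simp [hr, this]
  have hsub : (F : Set ℤ) ⊆ Aset i k ∩ Set.Icc (-(((4*k+4*i+2) * M : ℕ) : ℤ)) (((4*k+4*i+2) * M : ℕ) : ℤ) := by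
    intro x hx
    simp only [hF, Finset.coe_image, Set.mem_image, Finset.mem_coe, Finset.mem_product] at hx
    obtain ⟨⟨m, r⟩, hmr, rfl⟩ := hx
    simp only [Finset.mem_product, Finset.mem_Ico] at hmr
    obtain ⟨⟨hm1, hm2⟩, hr⟩ := hmr
    dsimp only
    obtain ⟨h0, h1, j, hj, hjr⟩ := hmemR r hr
    constructor
    · exact ⟨j, hj, by rw [← hp, hmod m r h0 h1]; exact hjr⟩
    · simp only [Set.mem_Icc]
      have hcast : (((4*k+4*i+2) * M : ℕ) : ℤ) = p * M := by push_cast [hp]; ring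
      rw [hcast]
      constructor
      · nlinarith
      · nlinarith
  calc 4 * k * M = F.card := hcardF.symm
    _ = (F : Set ℤ).ncard := (Set.ncard_coe_finset F).symm
    _ ≤ _ := Set.ncard_le_ncard hsub ((Set.finite_Icc _ _).inter_of_right _)

lemma f_nonneg (A : Set ℤ) (N : ℕ) :
    (0:ℝ) ≤ ((A ∩ Set.Icc (-(N : ℤ)) (N : ℤ)).ncard : ℝ) / (2 * (N : ℝ) + 1) := by
  positivity

lemma f_le_one (A : Set ℤ) (N : ℕ) :
    ((A ∩ Set.Icc (-(N : ℤ)) (N : ℤ)).ncard : ℝ) / (2 * (N : ℝ) + 1) ≤ 1 := by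
  rw [div_le_one (by positivity)]
  have := count_upper A N
  exact_mod_cast le_trans (Nat.cast_le.mpr this) (by push_cast; linarith)

lemma density_le_one (A : Set ℤ) : density A ≤ 1 := by
  apply Filter.limsup_le_of_le
  · exact isCoboundedUnder_le_of_eventually_le atTop
      (Eventually.of_forall (fun N => f_nonneg A N))
  · exact Eventually.of_forall (fun N => f_le_one A N)

lemma density_le_half (S : Finset ℕ) (h1 : 1 ∈ S) (A : Set ℤ) (hA : IsIndepSet S A) :
    density A ≤ 1 / 2 := by
  have hg : Tendsto (fun N : ℕ => ((N : ℝ) + 1) / (2 * N + 1)) atTop (nhds (1/2 : ℝ)) := by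
    have h0 : Tendsto (fun N : ℕ => (1:ℝ)/N) atTop (nhds 0) := tendsto_one_div_atTop_nhds_zero_nat
    have key : Tendsto (fun N : ℕ => (1 + (1:ℝ)/N) / (2 + 1/N)) atTop
        (nhds ((1 + 0) / (2 + 0) : ℝ)) :=
      Tendsto.div (tendsto_const_nhds.add h0) (tendsto_const_nhds.add h0) (by norm_num)
    rw [show ((1 + 0) / (2 + 0) : ℝ) = 1/2 by norm_num] at key
    apply key.congr'
    filter_upwards [eventually_ge_atTop 1] with N hN
    have hN0 : (N:ℝ) ≥ 1 := by exact_mod_cast hN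
    field_simp
  have hle : ∀ᶠ (N : ℕ) in atTop, ((A ∩ Set.Icc (-(N : ℤ)) (N : ℤ)).ncard : ℝ) / (2 * (N : ℝ) + 1)
      ≤ ((N : ℝ) + 1) / (2 * N + 1) := by
    apply Eventually.of_forall
    intro N
    have h := count_indep S h1 A hA N
    gcongr
    exact_mod_cast le_trans (Nat.cast_le.mpr h) (by push_cast; linarith)
  refine le_trans (Filter.limsup_le_limsup hle ?_ hg.isBoundedUnder_le) (le_of_eq hg.limsup_eq)
  exact isCoboundedUnder_le_of_eventually_le atTop (Eventually.of_forall (fun N => f_nonneg A N))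


lemma density_lower (i k : ℕ) :
    (2*k : ℝ) / (4*k+4*i+2) ≤ density (Aset i k) := by
  set P : ℕ := 4*k+4*i+2 with hP
  set f : ℕ → ℝ := fun N =>
    ((Aset i k ∩ Set.Icc (-(N : ℤ)) (N : ℤ)).ncard : ℝ) / (2 * (N : ℝ) + 1) with hf
  set u : ℕ → ℕ := fun M => P * M with hu
  set g : ℕ → ℝ := fun M => (4*k*M : ℝ) / (2 * ((P*M : ℕ) : ℝ) + 1) with hg
  have hfnn : ∀ N, 0 ≤ f N := fun N => f_nonneg _ N
  have hfb : ∀ N, f N ≤ 1 := fun N => f_le_one _ N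
  have hPpos : (0:ℝ) < (P:ℝ) := by positivity
  have hgle : ∀ M, g M ≤ f (u M) := by
    intro M
    have h := count_lower i k M
    simp only [hg, hf, hu]
    gcongr
    exact_mod_cast le_trans (Nat.cast_le.mpr h) (le_of_eq (by rw [hP]; push_cast; ring_nf))
  have hgt : Tendsto g atTop (nhds ((2*k : ℝ) / (4*k+4*i+2))) := by
    have h0 : Tendsto (fun M : ℕ => (1:ℝ)/M) atTop (nhds 0) := tendsto_one_div_atTop_nhds_zero_nat
    have key : Tendsto (fun M : ℕ => (4*k : ℝ) / (2*P + 1/M)) atTop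
        (nhds ((4*k : ℝ) / (2*P + 0))) :=
      Tendsto.div tendsto_const_nhds (tendsto_const_nhds.add h0) (by positivity)
    have hval : ((4*k : ℝ) / (2*P + 0)) = (2*k : ℝ) / (4*k+4*i+2) := by
      rw [add_zero, div_eq_div_iff (by positivity) (by positivity)]
      push_cast [hP]
      ring
    rw [hval] at key
    apply key.congr'
    filter_upwards [eventually_ge_atTop 1] with M hM
    have hM0 : (M:ℝ) ≥ 1 := by exact_mod_cast hM
    have h1M : (0:ℝ) < (M:ℝ) := by linarith
    simp only [hg]
    have hd1 : (0:ℝ) < 2*(P:ℝ) + 1/(M:ℝ) := by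
      have h2 := one_div_pos.mpr h1M
      linarith
    have hd2 : (0:ℝ) < 2 * ((P*M : ℕ) : ℝ) + 1 := by positivity
    rw [div_eq_div_iff hd1.ne' hd2.ne']
    push_cast
    field_simp
  have step1 : (2*k : ℝ) / (4*k+4*i+2) ≤ limsup (fun M => f (u M)) atTop := by
    rw [← hgt.limsup_eq]
    refine Filter.limsup_le_limsup (Eventually.of_forall hgle) ?_ ?_
    · exact isCoboundedUnder_le_of_eventually_le atTop
        (Eventually.of_forall (fun M => by simp only [hg]; positivity))
    · exact Filter.isBoundedUnder_of ⟨1, fun M => hfb (u M)⟩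
  have hmap : limsup (fun M => f (u M)) atTop = limsup f (Filter.map u atTop) := by
    rw [Filter.limsup, Filter.limsup, Filter.map_map]
    rfl
  have hten : Tendsto u atTop atTop := by
    apply tendsto_atTop_mono (fun M => ?_) tendsto_id
    simp only [hu, id]
    nlinarith [Nat.zero_le M]
  have step2 : limsup f (Filter.map u atTop) ≤ limsup f atTop := by
    refine Filter.limsup_le_limsup_of_le hten ?_ ?_
    · exact isCoboundedUnder_le_of_eventually_le _ (Eventually.of_forall hfnn)
    · exact Filter.isBoundedUnder_of ⟨1, fun N => hfb N⟩
  calc (2*k : ℝ) / (4*k+4*i+2) ≤ limsup (fun M => f (u M)) atTop := step1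
    _ = limsup f (Filter.map u atTop) := hmap
    _ ≤ limsup f atTop := step2
    _ = density (Aset i k) := rfl

lemma image_nonempty (S : Finset ℕ) : (density '' {A : Set ℤ | IsIndepSet S A}).Nonempty :=
  ⟨density ∅, ⟨∅, fun a ha => absurd ha (Set.notMem_empty a), rfl⟩⟩

lemma image_bddAbove (S : Finset ℕ) : BddAbove (density '' {A : Set ℤ | IsIndepSet S A}) := by
  refine ⟨1, ?_⟩
  rintro x ⟨A, -, rfl⟩
  exact density_le_one A

lemma indRatio_le_half (S : Finset ℕ) (h1 : 1 ∈ S) : indRatio S ≤ 1/2 := by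
  refine csSup_le (image_nonempty S) ?_
  rintro x ⟨A, hA, rfl⟩
  exact density_le_half S h1 A hA

lemma indRatio_lower (i k : ℕ) (hk : 1 ≤ k) (hi : 1 ≤ i) :
    (2*k : ℝ) / (4*k+4*i+2) ≤ indRatio ({1, 2 * i + 1, 2 * k} : Finset ℕ) :=
  le_trans (density_lower i k)
    (le_csSup (image_bddAbove _) ⟨Aset i k, aset_indep i k hk hi, rfl⟩)

lemma tendsto_lo (i : ℕ) :
    Tendsto (fun k : ℕ => (2*k : ℝ) / (4*k+4*i+2)) atTop (nhds (1/2 : ℝ)) := by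
  have h0 : Tendsto (fun k : ℕ => (1:ℝ)/k) atTop (nhds 0) := tendsto_one_div_atTop_nhds_zero_nat
  have key : Tendsto (fun k : ℕ => (2:ℝ) / (4 + (4*i+2) * (1/k))) atTop
      (nhds ((2:ℝ) / (4 + (4*i+2) * 0))) :=
    Tendsto.div tendsto_const_nhds (tendsto_const_nhds.add (tendsto_const_nhds.mul h0))
      (by positivity)
  rw [show ((2:ℝ) / (4 + (4*i+2) * 0)) = 1/2 by norm_num] at key
  apply key.congr'
  filter_upwards [eventually_ge_atTop 1] with k hk
  have hk0 : (0:ℝ) < (k:ℝ) := by exact_mod_cast hk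
  have hd1 : (0:ℝ) < 4 + (4*(i:ℝ)+2) * (1/(k:ℝ)) := by positivity
  have hd2 : (0:ℝ) < 4*(k:ℝ)+4*(i:ℝ)+2 := by positivity
  rw [div_eq_div_iff hd1.ne' hd2.ne']
  field_simp
  ring

/-- For fixed `i ≥ 1`, `ᾱ({1, 2i+1, 2k}) → 1/2` as `k → ∞`. -/
theorem tendsto_indRatio_one_odd_even (i : ℕ) (hi : 1 ≤ i) :
    Filter.Tendsto (fun k : ℕ => indRatio ({1, 2 * i + 1, 2 * k} : Finset ℕ))
      Filter.atTop (nhds (1 / 2 : ℝ)) := by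
  refine tendsto_of_tendsto_of_tendsto_of_le_of_le' (tendsto_lo i) tendsto_const_nhds ?_ ?_
  · filter_upwards [eventually_ge_atTop 1] with k hk
    exact indRatio_lower i k hk hi
  · exact Eventually.of_forall fun k =>
      indRatio_le_half _ (Finset.mem_insert_self 1 _)
end

section
/- Let i ≥ 2 be an integer. Then ᾱ({1, 3, 2i}) = i/(2i+3). -/
open Filter

def A0 (i : ℕ) : Set ℤ := {n | ∃ k : ℕ, k < i ∧ n % (2*(i:ℤ)+3) = 2*k}

theorem gapLemma (a : ℕ → ℤ) (i : ℕ) (hi : 2 ≤ i)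
    (hg2 : ∀ j < i, 2 ≤ a (j+1) - a j)
    (hg3 : ∀ j < i, a (j+1) - a j ≠ 3)
    (hspan : a i - a 0 ≤ 2*(i:ℤ) + 2) :
    ∃ l m, l ≤ m ∧ m ≤ i ∧ a m - a l = 2*(i:ℤ) := by
  have L1 : ∀ l m, l ≤ m → m ≤ i → 2*((m:ℤ) - l) ≤ a m - a l := by
    intro l m hlm hmi
    induction m with
    | zero =>
      have : l = 0 := by omega
      subst this; push_cast; omega
    | succ n ih =>
      rcases Nat.eq_or_lt_of_le hlm with h | h
      · subst h; push_cast; omega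
      · have h1 := hg2 n (by omega)
        have h2 := ih (by omega) (by omega)
        push_cast
        push_cast at h2
        omega
  have L2 : ∀ l m, l ≤ m → m ≤ i → a m - a l ≠ 2*((m:ℤ) - l) + 1 := by
    intro l m hlm hmi
    induction m with
    | zero =>
      have : l = 0 := by omega
      subst this; push_cast; omega
    | succ n ih =>
      rcases Nat.eq_or_lt_of_le hlm with h | h
      · subst h; push_cast; omega
      · have h1 := hg2 n (by omega)
        have h3 := hg3 n (by omega)
        have h2 := L1 l n (by omega) (by omega)
        have h4 := ih (by omega) (by omega)
        push_cast
        push_cast at h2 h4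
        omega
  -- main argument
  have hs1 := L1 0 i (by omega) le_rfl
  have hs2 := L2 0 i (by omega) le_rfl
  push_cast at hs1 hs2
  by_cases hA : a i - a 0 = 2*(i:ℤ)
  · exact ⟨0, i, by omega, le_rfl, hA⟩
  -- then a i - a 0 = 2i+2
  have hspan' : a i - a 0 = 2*(i:ℤ) + 2 := by omega
  by_cases hB : a i - a 1 = 2*(i:ℤ)
  · exact ⟨1, i, by omega, le_rfl, hB⟩
  · have hs3 := L1 1 i (by omega) le_rfl
    have hs4 := L2 1 i (by omega) le_rfl
    have hg0 := hg2 0 (by omega); norm_num at hg0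
    -- a i - a 1 ≤ 2i - 2
    have hs5 : a i - a 1 ≤ 2*(i:ℤ) - 2 := by push_cast at hs3 hs4 ⊢; omega
    have hs6 := L1 1 (i-1) (by omega) (by omega)
    have hgl := hg2 (i-1) (by omega)
    have hil : i - 1 + 1 = i := by omega
    rw [hil] at hgl
    refine ⟨0, i-1, by omega, by omega, ?_⟩
    push_cast at hs6
    have : ((i:ℤ) - 1) = ((i-1 : ℕ) : ℤ) := by push_cast [Nat.cast_sub (by omega : 1 ≤ i)]; ring
    rw [← this] at hs6
    omega

theorem windowBound (i : ℕ) (hi : 2 ≤ i) (A : Set ℤ)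
    (hA : IsIndepSet ({1, 3, 2*i} : Finset ℕ) A) (x : ℤ) :
    (A ∩ Set.Icc x (x + 2*(i:ℤ) + 2)).ncard ≤ i := by
  by_contra hcon
  push_neg at hcon
  have hfin : (A ∩ Set.Icc x (x + 2*(i:ℤ) + 2)).Finite :=
    Set.Finite.inter_of_right (Set.finite_Icc _ _) A
  have hcard : i + 1 ≤ hfin.toFinset.card := by
    rw [← Set.ncard_eq_toFinset_card _ hfin]
    omega
  obtain ⟨t, hts, htc⟩ := Finset.exists_subset_card_eq hcard
  set e := t.orderEmbOfFin htc with he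
  have hmem : ∀ j : Fin (i+1), (e j ∈ A ∧ e j ∈ Set.Icc x (x + 2*(i:ℤ) + 2)) := by
    intro j
    have : e j ∈ t := t.orderEmbOfFin_mem htc j
    have := hts this
    rw [Set.Finite.mem_toFinset] at this
    exact this
  set a : ℕ → ℤ := fun j => e ⟨min j i, by omega⟩ with ha
  have haA : ∀ j, a j ∈ A := fun j => (hmem _).1
  have haI : ∀ j, a j ∈ Set.Icc x (x + 2*(i:ℤ) + 2) := fun j => (hmem _).2
  have hstrict : ∀ l m : ℕ, l < m → m ≤ i → a l < a m := by
    intro l m hlm hmi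
    apply (t.orderEmbOfFin htc).strictMono
    simp [Fin.lt_def]
    omega
  have hne : ∀ l m : ℕ, l < m → m ≤ i → (a m - a l).natAbs ∉ ({1, 3, 2*i} : Finset ℕ) := by
    intro l m hlm hmi
    exact hA (a m) (haA m) (a l) (haA l) (by have := hstrict l m hlm hmi; omega)
  have hgap : ∀ j < i, 2 ≤ a (j+1) - a j ∧ a (j+1) - a j ≠ 3 := by
    intro j hj
    have h1 := hstrict j (j+1) (by omega) (by omega)
    have h2 := hne j (j+1) (by omega) (by omega)
    simp only [Finset.mem_insert, Finset.mem_singleton] at h2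
    push_neg at h2
    obtain ⟨n1, n3, n2i⟩ := h2
    constructor
    · omega
    · omega
  obtain ⟨l, m, hlm, hmi, heq⟩ := gapLemma a i hi (fun j hj => (hgap j hj).1)
    (fun j hj => (hgap j hj).2)
    (by have h0 := haI 0; have h1 := haI i; simp only [Set.mem_Icc] at h0 h1; omega)
  have hlm' : l < m := by
    rcases Nat.eq_or_lt_of_le hlm with h | h
    · subst h; omega
    · exact h
  have := hne l m hlm' hmi
  simp only [Finset.mem_insert, Finset.mem_singleton] at this
  push_neg at this
  omega

theorem A0_indep (i : ℕ) (hi : 2 ≤ i) : IsIndepSet ({1, 3, 2*i} : Finset ℕ) (A0 i) := by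
  intro a ha b hb hab hmem
  obtain ⟨k, hk, hka⟩ := ha
  obtain ⟨l, hl, hlb⟩ := hb
  simp only [Finset.mem_insert, Finset.mem_singleton] at hmem
  set p : ℤ := 2*(i:ℤ)+3 with hp
  have hmod : (a - b) % p = (2*(k:ℤ) - 2*l) % p := by
    rw [Int.sub_emod, hka, hlb]
  have hdvd : p ∣ (2*(k:ℤ) - 2*l) - (a - b) := Int.ModEq.dvd hmod
  obtain ⟨c, hc⟩ := hdvd
  have hki : (k:ℤ) ≤ (i:ℤ) - 1 := by omega
  have hli : (l:ℤ) ≤ (i:ℤ) - 1 := by omega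
  have hk0 : (0:ℤ) ≤ k := Int.natCast_nonneg k
  have hl0 : (0:ℤ) ≤ l := Int.natCast_nonneg l
  have hab' : a - b ≤ 2*(i:ℤ) ∧ -(2*(i:ℤ)) ≤ a - b := by
    rcases hmem with h | h | h <;> omega
  have hcb : c = -1 ∨ c = 0 ∨ c = 1 := by
    by_contra h
    push_neg at h
    have h2 : c ≤ -2 ∨ 2 ≤ c := by omega
    have hp0 : (0:ℤ) < p := by positivity
    rcases h2 with h2 | h2
    · nlinarith
    · nlinarith
  rcases hcb with rfl | rfl | rfl <;> (rw [hp] at hc; push_cast at hc; omega)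

theorem countLB (i : ℕ) (hi : 2 ≤ i) (N : ℕ) :
    2 * (N / (2*i+3)) * i ≤ (A0 i ∩ Set.Icc (-(N:ℤ)) (N:ℤ)).ncard := by
  classical
  set q : ℕ := N / (2*i+3) with hq
  set p : ℤ := 2*(i:ℤ)+3 with hp
  have hp0 : (0:ℤ) < p := by positivity
  have hqN : ((2*i+3) : ℕ) * q ≤ N := Nat.mul_div_le N (2*i+3)
  set F : Finset ℤ :=
    (Finset.Icc (-(q:ℤ)) ((q:ℤ)-1) ×ˢ Finset.range i).image
      (fun mk : ℤ × ℕ => p * mk.1 + 2 * mk.2) with hF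
  have hinj : Set.InjOn (fun mk : ℤ × ℕ => p * mk.1 + 2 * mk.2)
      ↑(Finset.Icc (-(q:ℤ)) ((q:ℤ)-1) ×ˢ Finset.range i) := by
    rintro ⟨m, k⟩ h1 ⟨m', k'⟩ h2 heq
    simp only [Finset.coe_product, Set.mem_prod, Finset.mem_coe, Finset.mem_Icc,
      Finset.mem_range] at h1 h2
    simp only [Prod.mk.injEq] at heq ⊢
    have heq' : p * (m - m') = 2*(k':ℤ) - 2*k := by push_cast at heq ⊢; linarith
    have hk' : (k':ℤ) < i := by exact_mod_cast h2.2
    have hk : (k:ℤ) < i := by exact_mod_cast h1.2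
    have hk0 : (0:ℤ) ≤ k := Int.natCast_nonneg k
    have hk0' : (0:ℤ) ≤ k' := Int.natCast_nonneg k'
    have hmm : m = m' := by
      by_contra hne
      have h2' : m - m' ≤ -1 ∨ 1 ≤ m - m' := by omega
      rcases h2' with h2' | h2' <;> nlinarith
    subst hmm
    refine ⟨rfl, ?_⟩
    have : (k:ℤ) = k' := by linarith [heq']
    exact_mod_cast this
  have hcardF : F.card = 2 * q * i := by
    rw [hF, Finset.card_image_of_injOn hinj, Finset.card_product, Finset.card_range,
      Int.card_Icc]
    have : ((q:ℤ) - 1 + 1 - -(q:ℤ)) = 2*q := by ring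
    rw [this]
    have h2q : ((2*(q:ℤ)).toNat) = 2*q := by omega
    rw [h2q]
  have hsub : ↑F ⊆ A0 i ∩ Set.Icc (-(N:ℤ)) (N:ℤ) := by
    intro n hn
    simp only [hF, Finset.coe_image, Set.mem_image, Finset.mem_coe, Finset.mem_product,
      Finset.mem_Icc, Finset.mem_range] at hn
    obtain ⟨⟨m, k⟩, ⟨⟨hm1, hm2⟩, hk⟩, rfl⟩ := hn
    have hk0 : (0:ℤ) ≤ 2*(k:ℤ) := by positivity
    have hki : 2*(k:ℤ) ≤ 2*(i:ℤ) - 2 := by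
      have : (k:ℤ) < i := by exact_mod_cast hk
      omega
    constructor
    · refine ⟨k, hk, ?_⟩
      have : (p * m + 2 * (k:ℤ)) % p = (2*(k:ℤ)) % p := by
        rw [add_comm, Int.add_mul_emod_self_left]
      rw [this, Int.emod_eq_of_lt hk0 (by omega)]
    · have hqr : p * q ≤ (N:ℤ) := by
        have := hqN
        push_cast
        push_cast at this
        nlinarith [this]
      simp only [Set.mem_Icc]
      constructor
      · nlinarith
      · nlinarith
  calc (2 * q * i : ℕ) = F.card := hcardF.symm
    _ = (↑F : Set ℤ).ncard := (Set.ncard_coe_finset F).symm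
    _ ≤ _ := Set.ncard_le_ncard hsub (Set.Finite.inter_of_right (Set.finite_Icc _ _) _)

theorem countUB (i : ℕ) (hi : 2 ≤ i) (A : Set ℤ)
    (hA : IsIndepSet ({1, 3, 2*i} : Finset ℕ) A) (N : ℕ) :
    (A ∩ Set.Icc (-(N:ℤ)) (N:ℤ)).ncard ≤ (2 * (N / (2*i+3)) + 2) * i := by
  classical
  set q : ℕ := N / (2*i+3) with hq
  set p : ℤ := 2*(i:ℤ)+3 with hp
  have hp0 : (0:ℤ) < p := by positivity
  have hqN : ((2*i+3) : ℕ) * q ≤ N := Nat.mul_div_le N (2*i+3)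
  have hNq : (N:ℕ) < (2*i+3) * (q + 1) := Nat.lt_mul_div_succ N (by omega)
  have hqN' : p * q ≤ (N:ℤ) := by push_cast at hqN ⊢; nlinarith
  have hNq' : (N:ℤ) < p * ((q:ℤ) + 1) := by push_cast at hNq ⊢; nlinarith
  have hfin : (A ∩ Set.Icc (-(N:ℤ)) (N:ℤ)).Finite :=
    Set.Finite.inter_of_right (Set.finite_Icc _ _) A
  rw [Set.ncard_eq_toFinset_card _ hfin]
  have hsub : hfin.toFinset ⊆
      (Finset.Icc (-(q:ℤ)-1) (q:ℤ)).biUnion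
        (fun m => (Finset.Icc (p*m) (p*m + 2*(i:ℤ) + 2)).filter (· ∈ A)) := by
    intro n hn
    rw [Set.Finite.mem_toFinset] at hn
    obtain ⟨hnA, hn1, hn2⟩ := hn
    rw [Finset.mem_biUnion]
    refine ⟨n / p, ?_, ?_⟩
    · rw [Finset.mem_Icc]
      have hdiv := Int.mul_ediv_add_emod n p
      have hr0 := Int.emod_nonneg n (by omega : p ≠ 0)
      have hr1 := Int.emod_lt_of_pos n hp0
      constructor
      · by_contra hcon
        push_neg at hcon
        have : n / p ≤ -(q:ℤ) - 2 := by omega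
        nlinarith [hdiv, this]
      · by_contra hcon
        push_neg at hcon
        have : (q:ℤ) + 1 ≤ n / p := by omega
        nlinarith [hdiv, this]
    · rw [Finset.mem_filter, Finset.mem_Icc]
      have hdiv := Int.mul_ediv_add_emod n p
      have hr0 := Int.emod_nonneg n (by omega : p ≠ 0)
      have hr1 := Int.emod_lt_of_pos n hp0
      exact ⟨⟨by omega, by omega⟩, hnA⟩
  calc hfin.toFinset.card ≤ _ := Finset.card_le_card hsub
    _ ≤ ∑ m ∈ Finset.Icc (-(q:ℤ)-1) (q:ℤ),
        ((Finset.Icc (p*m) (p*m + 2*(i:ℤ) + 2)).filter (· ∈ A)).card :=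
      Finset.card_biUnion_le
    _ ≤ ∑ m ∈ Finset.Icc (-(q:ℤ)-1) (q:ℤ), i := by
      apply Finset.sum_le_sum
      intro m _
      have hcoe : (↑((Finset.Icc (p*m) (p*m + 2*(i:ℤ) + 2)).filter (· ∈ A)) : Set ℤ)
          = A ∩ Set.Icc (p*m) (p*m + 2*(i:ℤ) + 2) := by
        ext n
        simp only [Finset.coe_filter, Finset.mem_Icc, Set.mem_inter_iff, Set.mem_Icc,
          Set.mem_setOf_eq]
        tauto
      have := windowBound i hi A hA (p*m)
      rw [← hcoe, Set.ncard_coe_finset] at this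
      exact this
    _ = (2 * q + 2) * i := by
      rw [Finset.sum_const, smul_eq_mul, Int.card_Icc]
      congr 1
      omega

-- analysis helpers
theorem h2N1 : Tendsto (fun N : ℕ => 2 * (N:ℝ) + 1) atTop atTop :=
  tendsto_atTop_add_const_right atTop 1 (tendsto_natCast_atTop_atTop.const_mul_atTop two_pos)

theorem tendsto_u (i : ℕ) :
    Tendsto (fun N : ℕ => (i:ℝ)/(2*(i:ℝ)+3) + 2*(i:ℝ)/(2*(N:ℝ)+1)) atTop
      (nhds ((i:ℝ)/(2*(i:ℝ)+3))) := by
  have h2 : Tendsto (fun N : ℕ => 2*(i:ℝ)/(2*(N:ℝ)+1)) atTop (nhds 0) :=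
    Tendsto.div_atTop tendsto_const_nhds h2N1
  simpa using tendsto_const_nhds.add h2

theorem tendsto_l (i : ℕ) :
    Tendsto (fun N : ℕ => (i:ℝ)/(2*(i:ℝ)+3) - 2*(i:ℝ)/(2*(N:ℝ)+1)) atTop
      (nhds ((i:ℝ)/(2*(i:ℝ)+3))) := by
  have h2 : Tendsto (fun N : ℕ => 2*(i:ℝ)/(2*(N:ℝ)+1)) atTop (nhds 0) :=
    Tendsto.div_atTop tendsto_const_nhds h2N1
  simpa using tendsto_const_nhds.sub h2

theorem key_ub (i : ℕ) (hi : 2 ≤ i) (N : ℕ) :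
    ((2 * (N / (2*i+3)) + 2) * i : ℕ) ≤ (i:ℝ)/(2*(i:ℝ)+3) * (2*(N:ℝ)+1) + 2*(i:ℝ) := by
  set q : ℕ := N / (2*i+3) with hq
  have hp0 : (0:ℝ) < 2*(i:ℝ)+3 := by positivity
  have hqN : ((2*i+3) : ℕ) * q ≤ N := Nat.mul_div_le N (2*i+3)
  have hqN' : (2*(i:ℝ)+3) * q ≤ (N:ℝ) := by exact_mod_cast hqN
  have h3 : 2*(q:ℝ)*i ≤ (i:ℝ)/(2*(i:ℝ)+3) * (2*(N:ℝ)+1) := by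
    rw [div_mul_eq_mul_div, le_div_iff₀ hp0]
    nlinarith [mul_le_mul_of_nonneg_left hqN' (by positivity : (0:ℝ) ≤ 2*(i:ℝ)),
      Nat.cast_nonneg (α := ℝ) i]
  push_cast
  nlinarith [h3]

theorem key_lb (i : ℕ) (hi : 2 ≤ i) (N : ℕ) :
    (i:ℝ)/(2*(i:ℝ)+3) * (2*(N:ℝ)+1) - 2*(i:ℝ) ≤ (2 * (N / (2*i+3)) * i : ℕ) := by
  set q : ℕ := N / (2*i+3) with hq
  have hp0 : (0:ℝ) < 2*(i:ℝ)+3 := by positivity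
  have hNq : (N:ℕ) < (2*i+3) * (q + 1) := Nat.lt_mul_div_succ N (by omega)
  have hNq' : (N:ℝ) + 1 ≤ (2*(i:ℝ)+3) * ((q:ℝ) + 1) := by exact_mod_cast hNq
  have h3 : (i:ℝ)/(2*(i:ℝ)+3) * (2*(N:ℝ)+1) ≤ 2*(q:ℝ)*i + 2*(i:ℝ) := by
    rw [div_mul_eq_mul_div, div_le_iff₀ hp0]
    nlinarith [mul_le_mul_of_nonneg_left hNq' (by positivity : (0:ℝ) ≤ 2*(i:ℝ)),
      Nat.cast_nonneg (α := ℝ) i]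
  push_cast
  nlinarith [h3]

theorem ratio_ub (i : ℕ) (hi : 2 ≤ i) (A : Set ℤ)
    (hA : IsIndepSet ({1, 3, 2*i} : Finset ℕ) A) (N : ℕ) :
    ((A ∩ Set.Icc (-(N : ℤ)) (N : ℤ)).ncard : ℝ) / (2 * (N : ℝ) + 1)
      ≤ (i:ℝ)/(2*(i:ℝ)+3) + 2*(i:ℝ)/(2*(N:ℝ)+1) := by
  have h1 : (0:ℝ) < 2*(N:ℝ)+1 := by positivity
  rw [div_le_iff₀ h1, add_mul, div_mul_cancel₀ _ (ne_of_gt h1)]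
  have hc : ((A ∩ Set.Icc (-(N : ℤ)) (N : ℤ)).ncard : ℝ)
      ≤ ((2 * (N / (2*i+3)) + 2) * i : ℕ) := by
    exact_mod_cast countUB i hi A hA N
  calc ((A ∩ Set.Icc (-(N : ℤ)) (N : ℤ)).ncard : ℝ)
      ≤ ((2 * (N / (2*i+3)) + 2) * i : ℕ) := hc
    _ ≤ (i:ℝ)/(2*(i:ℝ)+3) * (2*(N:ℝ)+1) + 2*(i:ℝ) := key_ub i hi N

theorem density_le (i : ℕ) (hi : 2 ≤ i) (A : Set ℤ)
    (hA : IsIndepSet ({1, 3, 2*i} : Finset ℕ) A) :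
    density A ≤ (i:ℝ)/(2*(i:ℝ)+3) := by
  have hu := tendsto_u i
  have hco : IsCoboundedUnder (· ≤ ·) atTop
      (fun N : ℕ => ((A ∩ Set.Icc (-(N : ℤ)) (N : ℤ)).ncard : ℝ) / (2 * (N : ℝ) + 1)) :=
    isCoboundedUnder_le_of_le atTop (x := 0) (fun N => by positivity)
  calc density A ≤ limsup (fun N : ℕ => (i:ℝ)/(2*(i:ℝ)+3) + 2*(i:ℝ)/(2*(N:ℝ)+1)) atTop :=
        limsup_le_limsup (Eventually.of_forall (ratio_ub i hi A hA)) hco hu.isBoundedUnder_le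
    _ = (i:ℝ)/(2*(i:ℝ)+3) := hu.limsup_eq

theorem density_A0 (i : ℕ) (hi : 2 ≤ i) : density (A0 i) = (i:ℝ)/(2*(i:ℝ)+3) := by
  have htend : Tendsto
      (fun N : ℕ => ((A0 i ∩ Set.Icc (-(N : ℤ)) (N : ℤ)).ncard : ℝ) / (2 * (N : ℝ) + 1))
      atTop (nhds ((i:ℝ)/(2*(i:ℝ)+3))) := by
    apply tendsto_of_tendsto_of_tendsto_of_le_of_le (tendsto_l i) (tendsto_u i)
    · intro N
      have h1 : (0:ℝ) < 2*(N:ℝ)+1 := by positivity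
      simp only
      rw [le_div_iff₀ h1, sub_mul, div_mul_cancel₀ _ (ne_of_gt h1)]
      have hc : ((2 * (N / (2*i+3)) * i : ℕ) : ℝ)
          ≤ ((A0 i ∩ Set.Icc (-(N : ℤ)) (N : ℤ)).ncard : ℝ) := by
        exact_mod_cast countLB i hi N
      linarith [key_lb i hi N]
    · exact fun N => ratio_ub i hi (A0 i) (A0_indep i hi) N
  exact htend.limsup_eq

/-- For `i ≥ 2`, `ᾱ({1, 3, 2i}) = i/(2i+3)`. -/
theorem indRatio_one_three_even (i : ℕ) (hi : 2 ≤ i) :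
    indRatio ({1, 3, 2 * i} : Finset ℕ) = (i : ℝ) / (2 * (i : ℝ) + 3) := by
  apply IsGreatest.csSup_eq
  constructor
  · exact ⟨A0 i, A0_indep i hi, density_A0 i hi⟩
  · rintro x ⟨A, hA, rfl⟩
    exact density_le i hi A hA
end
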